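/- (Neyman–Pearson lemma.) Let X be a finite set, let p_0 and p_1 be probability mass functions on X, let λ > 0, and let A_LRT = {x ∈ X : p_1(x) > λ p_0(x)} be the acceptance region of the likelihood ratio test. Then for every subset A ⊆ X with Σ_{x∈A} p_0(x) ≤ Σ_{x∈A_LRT} p_0(x), one has Σ_{x∈A} p_1(x) ≤ Σ_{x∈A_LRT} p_1(x). In other words, there is no test whose false-alarm probability does not exceed that of the likelihood ratio test and whose detection probability is strictly larger: the likelihood ratio test is the most powerful test at its own false-alarm level. -/

import Mathlib

/-- **Neyman–Pearson lemma.** On a finite observation space `X` with probability mass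
functions `p₀` (under `H₀`) and `p₁` (under `H₁`) and `λ > 0`, let
`A_LRT = {x : p₁(x) > λ p₀(x)}` be the acceptance region of the likelihood ratio test.
Then every test `A ⊆ X` whose false-alarm probability `∑_{x∈A} p₀(x)` does not exceed that
of `A_LRT` has detection probability `∑_{x∈A} p₁(x)` at most that of `A_LRT`: the LRT is
the most powerful test at its own false-alarm level. -/
theorem neyman_pearson {X : Type*} [Fintype X] (p0 p1 : X → ℝ)
    (h0 : ∀ x, 0 ≤ p0 x) (h1 : ∀ x, 0 ≤ p1 x)
    (hs0 : ∑ x, p0 x = 1) (hs1 : ∑ x, p1 x = 1)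
    (lam : ℝ) (hlam : 0 < lam)
    (A : Finset X)
    (hFA : ∑ x ∈ A, p0 x
      ≤ ∑ x ∈ Finset.univ.filter fun x => lam * p0 x < p1 x, p0 x) :
    ∑ x ∈ A, p1 x ≤ ∑ x ∈ Finset.univ.filter fun x => lam * p0 x < p1 x, p1 x := by
  classical
  set L := Finset.univ.filter fun x => lam * p0 x < p1 x with hL
  set f := fun x => p1 x - lam * p0 x with hf
  have key : ∑ x ∈ A, f x ≤ ∑ x ∈ L, f x := by
    have h1 : ∑ x ∈ A, f x ≤ ∑ x ∈ A ∩ L, f x := by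
      have := Finset.sum_inter_add_sum_sdiff A L f
      have hneg : ∑ x ∈ A \ L, f x ≤ 0 := by
        apply Finset.sum_nonpos
        intro x hx
        simp only [Finset.mem_sdiff, hL, Finset.mem_filter, Finset.mem_univ, true_and,
          not_lt] at hx
        simp [hf]; linarith [hx.2]
      linarith
    have h2 : ∑ x ∈ A ∩ L, f x ≤ ∑ x ∈ L, f x := by
      apply Finset.sum_le_sum_of_subset_of_nonneg (Finset.inter_subset_right)
      intro x hx _
      simp only [hL, Finset.mem_filter] at hx
      simp [hf]; linarith [hx.2]
    linarith
  have e1 : ∑ x ∈ A, f x = ∑ x ∈ A, p1 x - lam * ∑ x ∈ A, p0 x := by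
    simp [hf, Finset.sum_sub_distrib, Finset.mul_sum]
  have e2 : ∑ x ∈ L, f x = ∑ x ∈ L, p1 x - lam * ∑ x ∈ L, p0 x := by
    simp [hf, Finset.sum_sub_distrib, Finset.mul_sum]
  nlinarith [hFA, key, hlam.le]
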